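/- For every pointed graph G and every vertex v of G (other than the sink), the pebbling number of G is at most max(♯(G[v:=0]), ♯(G[v:=1]) + 1), where G[v:=0] is the restriction of G to vertices from which v is reachable (with sink v), and G[v:=1] is obtained by deleting v and all incident edges and restricting to vertices from which the original sink remains reachable. -/

import Mathlib

attribute [local instance] Classical.propDecidable

/-- A clause: a finite set of literals, a literal being a variable with a sign. -/
abbrev Clause := Finset (ℕ × Bool)

/-- A total truth assignment satisfies a clause if it makes some literal true. -/
def clauseSat (a : ℕ → Bool) (C : Clause) : Prop :=
  ∃ l ∈ C, (if l.2 then a l.1 else !(a l.1)) = true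

/-- A set of clauses is unsatisfiable (contradictory). -/
def Unsat (S : Set Clause) : Prop := ∀ a : ℕ → Bool, ¬ ∀ C ∈ S, clauseSat a C

/-- A directed graph with a designated sink vertex. -/
structure PGraph where
  verts : Finset ℕ
  edges : Finset (ℕ × ℕ)
  sink : ℕ

def edgeRel (G : PGraph) (u v : ℕ) : Prop := (u, v) ∈ G.edges

def Reach (G : PGraph) (u v : ℕ) : Prop := Relation.ReflTransGen (edgeRel G) u v

noncomputable def preds (G : PGraph) (v : ℕ) : Finset ℕ :=
  (G.edges.filter (fun e => e.2 = v)).image Prod.fst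

/-- A pointed graph: a DAG whose edges join vertices, indegrees at most 2, with a
unique sink belonging to the graph and reachable from every vertex. -/
def IsPointed (G : PGraph) : Prop :=
  G.sink ∈ G.verts ∧
  (∀ e ∈ G.edges, e.1 ∈ G.verts ∧ e.2 ∈ G.verts) ∧
  (∀ v, ¬ Relation.TransGen (edgeRel G) v v) ∧
  (∀ v ∈ G.verts, (preds G v).card ≤ 2) ∧
  (∀ v ∈ G.verts, Reach G v G.sink)

/-- The clause of the pebbling formula associated with a vertex: the negations of its
predecessors, together with the vertex itself positively (omitted at the sink, which
plays the role of ⊥). Sources thus get unit clauses. -/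
noncomputable def ClauseOf (G : PGraph) (v : ℕ) : Clause :=
  ((preds G v).image (fun u => (u, false))) ∪
    (if v = G.sink then (∅ : Clause) else {(v, true)})

/-- The pebbling formula Peb(G). -/
noncomputable def Peb (G : PGraph) : Set Clause := (fun v => ClauseOf G v) '' ↑G.verts

/-- A legal move of the pebbling game: place a pebble on a vertex all of whose
predecessors are pebbled (for sources this allows placement at any time), or remove
a pebble from any vertex. -/
def PebStep (G : PGraph) (C D : Finset ℕ) : Prop :=
  (∃ v ∈ G.verts, preds G v ⊆ C ∧ D = insert v C) ∨ (∃ v, D = C.erase v)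

/-- A (successful) strategy for the pebbling game on G: a sequence of configurations
starting from the empty configuration, each obtained from the previous by a legal
move, ending with a pebble on the sink. -/
def IsStrategy (G : PGraph) (L : List (Finset ℕ)) : Prop :=
  L.head? = some ∅ ∧ (∃ C, L.getLast? = some C ∧ G.sink ∈ C) ∧ List.Chain' (PebStep G) L

/-- The cost of a strategy: the maximum number of pebbles simultaneously on the graph. -/
def cost (L : List (Finset ℕ)) : ℕ := (L.map Finset.card).foldr max 0

/-- The pebbling number ♯G: the minimum cost of a strategy for the pebbling game on G. -/
noncomputable def pebNum (G : PGraph) : ℕ :=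
  sInf { p | ∃ L : List (Finset ℕ), IsStrategy G L ∧ cost L ≤ p }

/-- G[v:=0]: the induced subgraph on the vertices from which v is reachable, with v
as the new sink. -/
noncomputable def restrict0 (G : PGraph) (v : ℕ) : PGraph where
  verts := G.verts.filter (fun u => Reach G u v)
  edges := G.edges.filter (fun e => Reach G e.1 v ∧ Reach G e.2 v)
  sink := v

/-- Deletion of a vertex together with all edges entering or leaving it. -/
def deleteVert (G : PGraph) (v : ℕ) : PGraph where
  verts := G.verts.erase v
  edges := G.edges.filter (fun e => e.1 ≠ v ∧ e.2 ≠ v)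
  sink := G.sink

/-- Restriction of a graph to the vertices from which the sink is reachable. -/
noncomputable def restrictSink (G : PGraph) : PGraph where
  verts := G.verts.filter (fun u => Reach G u G.sink)
  edges := G.edges.filter (fun e => Reach G e.1 G.sink ∧ Reach G e.2 G.sink)
  sink := G.sink

/-- G[v:=1]: delete v and all incident edges, then restrict to the vertices from which
the original sink remains reachable. -/
noncomputable def restrict1 (G : PGraph) (v : ℕ) : PGraph := restrictSink (deleteVert G v)

/- ---------------- Auxiliary lemmas ---------------- -/

lemma mem_preds {G : PGraph} {w u : ℕ} : w ∈ preds G u ↔ (w, u) ∈ G.edges := by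
  simp only [preds, Finset.mem_image, Finset.mem_filter]
  constructor
  · rintro ⟨⟨a, b⟩, ⟨he, h2⟩, h1⟩
    simp only at h1 h2
    subst h1; subst h2; exact he
  · intro h; exact ⟨(w, u), ⟨h, rfl⟩, rfl⟩

lemma pebStep_refl (G : PGraph) (C : Finset ℕ) : PebStep G C C := by
  refine Or.inr ⟨C.sup id + 1, ?_⟩
  rw [Finset.erase_eq_of_notMem]
  intro h
  have := Finset.le_sup (f := id) h
  simp only [id] at this
  omega

lemma cost_le_iff {L : List (Finset ℕ)} {p : ℕ} :
    cost L ≤ p ↔ ∀ C ∈ L, C.card ≤ p := by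
  induction L with
  | nil => simp [cost]
  | cons C L ih =>
    simp only [cost, List.map_cons, List.foldr_cons, List.mem_cons] at ih ⊢
    constructor
    · intro h D hD
      rcases hD with rfl | hD
      · exact le_trans (le_max_left _ _) h
      · exact ih.mp (le_trans (le_max_right _ _) h) D hD
    · intro h
      exact max_le (h C (Or.inl rfl)) (ih.mpr fun D hD => h D (Or.inr hD))

lemma exists_no_succ (G : PGraph) (hac : ∀ w, ¬ Relation.TransGen (edgeRel G) w w) :
    ∀ (n : ℕ) (S : Finset ℕ), S.card ≤ n → S.Nonempty →
      ∃ w ∈ S, ∀ u ∈ S, ¬ edgeRel G w u := by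
  intro n
  induction n with
  | zero =>
    intro S hc hne
    rcases hne with ⟨x, hx⟩
    have : 0 < S.card := Finset.card_pos.mpr ⟨x, hx⟩
    omega
  | succ n ih =>
    intro S hc hne
    obtain ⟨w0, hw0⟩ := hne
    by_cases h : ∀ u ∈ S, ¬ edgeRel G w0 u
    · exact ⟨w0, hw0, h⟩
    · set S' := S.filter (fun u => Relation.TransGen (edgeRel G) w0 u) with hS'
      have hS'sub : S' ⊆ S.erase w0 := by
        intro x hx
        rw [Finset.mem_erase]
        rw [hS', Finset.mem_filter] at hx
        refine ⟨?_, hx.1⟩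
        intro hxw
        exact hac w0 (hxw ▸ hx.2)
      have hne' : S'.Nonempty := by
        push_neg at h
        obtain ⟨u, hu, he⟩ := h
        exact ⟨u, Finset.mem_filter.mpr ⟨hu, Relation.TransGen.single he⟩⟩
      have hcard' : S'.card ≤ n := by
        have h1 := Finset.card_le_card hS'sub
        have h2 := Finset.card_erase_of_mem hw0
        omega
      obtain ⟨w, hwS', hw⟩ := ih S' hcard' hne'
      have hwmem := Finset.mem_filter.mp hwS'
      refine ⟨w, hwmem.1, ?_⟩
      intro u hu he
      have : u ∈ S' := Finset.mem_filter.mpr ⟨hu, hwmem.2.tail he⟩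
      exact hw u this he

lemma exists_strategy (G : PGraph) (hs : G.sink ∈ G.verts)
    (he : ∀ e ∈ G.edges, e.1 ∈ G.verts ∧ e.2 ∈ G.verts)
    (hac : ∀ w, ¬ Relation.TransGen (edgeRel G) w w) :
    ∃ L, IsStrategy G L := by
  have key : ∀ (n : ℕ) (S : Finset ℕ), S.card ≤ n → S ⊆ G.verts →
      (∀ u ∈ S, preds G u ⊆ S) →
      ∃ L : List (Finset ℕ), L.head? = some ∅ ∧ L.getLast? = some S ∧
        List.Chain' (PebStep G) L := by
    intro n
    induction n with
    | zero =>
      intro S hc _ _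
      have : S = ∅ := Finset.card_eq_zero.mp (Nat.le_zero.mp hc)
      subst this
      exact ⟨[∅], rfl, rfl, List.isChain_singleton _⟩
    | succ n ih =>
      intro S hc hsub hclosed
      rcases S.eq_empty_or_nonempty with rfl | hne
      · exact ⟨[∅], rfl, rfl, List.isChain_singleton _⟩
      obtain ⟨w, hwS, hw⟩ := exists_no_succ G hac S.card S le_rfl hne
      have hwv : w ∈ G.verts := hsub hwS
      have hpw : preds G w ⊆ S := hclosed w hwS
      have hclosed' : ∀ u ∈ S.erase w, preds G u ⊆ S.erase w := by
        intro u hu x hx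
        have huS := Finset.mem_of_mem_erase hu
        have hxS := hclosed u huS hx
        rw [Finset.mem_erase]
        refine ⟨?_, hxS⟩
        rintro rfl
        exact hw u huS (mem_preds.mp hx)
      have hcard' : (S.erase w).card ≤ n := by
        have := Finset.card_erase_of_mem hwS
        have : 0 < S.card := Finset.card_pos.mpr hne
        have := Finset.card_erase_of_mem hwS
        omega
      obtain ⟨L, hh, hl, hch⟩ := ih (S.erase w) hcard'
        (fun x hx => hsub (Finset.mem_of_mem_erase hx)) hclosed'
      have hLne : L ≠ [] := by
        intro h; subst h; simp at hh
      refine ⟨L ++ [S], ?_, ?_, ?_⟩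
      · cases L with
        | nil => exact absurd rfl hLne
        | cons a t => simpa using hh
      · exact List.getLast?_concat
      · refine List.IsChain.append hch (List.isChain_singleton _) ?_
        intro x hx y hy
        simp only [List.head?_cons, Option.mem_def, Option.some.injEq] at hy
        rw [Option.mem_def, hl, Option.some.injEq] at hx
        subst hx; subst hy
        refine Or.inl ⟨w, hwv, ?_, (Finset.insert_erase hwS).symm⟩
        intro x hx
        rw [Finset.mem_erase]
        refine ⟨?_, hpw hx⟩
        intro hxw
        exact hac w (Relation.TransGen.single (mem_preds.mp (hxw ▸ hx)))
  obtain ⟨L, hh, hl, hch⟩ := key G.verts.card G.verts le_rfl (fun _ h => h)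
    (fun u _ x hx => (he _ (mem_preds.mp hx)).1)
  exact ⟨L, hh, ⟨G.verts, hl, hs⟩, hch⟩

lemma erase_chain (G : PGraph) :
    ∀ (n : ℕ) (C : Finset ℕ) (v : ℕ), C.card ≤ n → v ∈ C →
    ∃ L : List (Finset ℕ), L.head? = some C ∧ L.getLast? = some {v} ∧
      List.Chain' (PebStep G) L ∧ ∀ D ∈ L, D ⊆ C := by
  intro n
  induction n with
  | zero =>
    intro C v hc hv
    have : 0 < C.card := Finset.card_pos.mpr ⟨v, hv⟩
    omega
  | succ n ih =>
    intro C v hc hv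
    by_cases hC : C = {v}
    · subst hC
      exact ⟨[{v}], rfl, rfl, List.isChain_singleton _, by simp⟩
    · have hu : ∃ u ∈ C, u ≠ v := by
        by_contra h
        push_neg at h
        exact hC (Finset.eq_singleton_iff_unique_mem.mpr ⟨hv, fun x hx => h x hx⟩)
      obtain ⟨u, huC, huv⟩ := hu
      have hv' : v ∈ C.erase u := Finset.mem_erase.mpr ⟨fun h => huv h.symm, hv⟩
      have hc' : (C.erase u).card ≤ n := by
        have := Finset.card_erase_of_mem huC
        have : 0 < C.card := Finset.card_pos.mpr ⟨v, hv⟩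
        have := Finset.card_erase_of_mem huC
        omega
      obtain ⟨L, hh, hl, hch, hsub⟩ := ih (C.erase u) v hc' hv'
      have hLne : L ≠ [] := by intro h; subst h; simp at hh
      refine ⟨C :: L, rfl, ?_, ?_, ?_⟩
      · cases L with
        | nil => exact absurd rfl hLne
        | cons a t => rw [List.getLast?_cons_cons]; exact hl
      · refine List.isChain_cons.mpr ?_
        refine ⟨?_, hch⟩
        intro y hy
        rw [Option.mem_def, hh, Option.some.injEq] at hy
        subst hy
        exact Or.inr ⟨u, rfl⟩
      · intro D hD
        rcases List.mem_cons.mp hD with rfl | hD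
        · exact Finset.Subset.refl _
        · exact Finset.Subset.trans (hsub D hD) (Finset.erase_subset _ _)

lemma preds_restrict0 {G : PGraph} {v u : ℕ} (hu : Reach G u v) :
    preds G u ⊆ preds (restrict0 G v) u := by
  intro w hw
  rw [mem_preds] at hw ⊢
  simp only [restrict0, Finset.mem_filter]
  exact ⟨hw, Relation.ReflTransGen.head (show edgeRel G w u from hw) hu, hu⟩

lemma pebStep_restrict0 {G : PGraph} {v : ℕ} {C D : Finset ℕ}
    (h : PebStep (restrict0 G v) C D) : PebStep G C D := by
  rcases h with ⟨u, hu, hp, rfl⟩ | h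
  · left
    simp only [restrict0, Finset.mem_filter] at hu
    exact ⟨u, hu.1, fun x hx => hp (preds_restrict0 hu.2 hx), rfl⟩
  · exact Or.inr h

lemma preds_restrict1 {G : PGraph} {v u : ℕ} (hu : u ∈ (restrict1 G v).verts) :
    preds G u ⊆ insert v (preds (restrict1 G v) u) := by
  intro w hw
  rw [mem_preds] at hw
  rcases eq_or_ne w v with rfl | hwv
  · exact Finset.mem_insert_self _ _
  · apply Finset.mem_insert_of_mem
    rw [mem_preds]
    simp only [restrict1, restrictSink, Finset.mem_filter] at hu ⊢
    have huv : u ≠ v := (Finset.mem_erase.mp hu.1).1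
    have hedge : (w, u) ∈ (deleteVert G v).edges := by
      simp only [deleteVert, Finset.mem_filter]
      exact ⟨hw, hwv, huv⟩
    exact ⟨hedge,
      Relation.ReflTransGen.head (show edgeRel (deleteVert G v) w u from hedge) hu.2, hu.2⟩

lemma verts_restrict1 {G : PGraph} {v u : ℕ} (hu : u ∈ (restrict1 G v).verts) :
    u ∈ G.verts ∧ u ≠ v := by
  simp only [restrict1, restrictSink, Finset.mem_filter] at hu
  have := Finset.mem_erase.mp hu.1
  exact ⟨this.2, this.1⟩

lemma pebStep_restrict1 {G : PGraph} {v : ℕ} {C D : Finset ℕ}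
    (h : PebStep (restrict1 G v) C D) : PebStep G (insert v C) (insert v D) := by
  rcases h with ⟨u, hu, hp, rfl⟩ | ⟨u, rfl⟩
  · left
    refine ⟨u, (verts_restrict1 hu).1, ?_, by rw [Finset.insert_comm]⟩
    intro x hx
    rcases Finset.mem_insert.mp (preds_restrict1 hu hx) with rfl | hx'
    · exact Finset.mem_insert_self _ _
    · exact Finset.mem_insert_of_mem (hp hx')
  · rcases eq_or_ne u v with huv | huv
    · rw [huv]
      have : insert v (C.erase v) = insert v C := by
        ext x
        simp only [Finset.mem_insert, Finset.mem_erase]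
        constructor
        · rintro (rfl | ⟨_, h⟩)
          · exact Or.inl rfl
          · exact Or.inr h
        · rintro (rfl | h)
          · exact Or.inl rfl
          · rcases eq_or_ne x v with rfl | hx
            · exact Or.inl rfl
            · exact Or.inr ⟨hx, h⟩
      rw [this]
      exact pebStep_refl G _
    · have : insert v (C.erase u) = (insert v C).erase u := by
        ext x
        simp only [Finset.mem_insert, Finset.mem_erase]
        constructor
        · rintro (rfl | ⟨hxu, hxC⟩)
          · exact ⟨huv.symm, Or.inl rfl⟩
          · exact ⟨hxu, Or.inr hxC⟩
        · rintro ⟨hxu, (rfl | hxC)⟩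
          · exact Or.inl rfl
          · exact Or.inr ⟨hxu, hxC⟩
      rw [this]
      exact Or.inr ⟨u, rfl⟩

lemma exists_opt (G : PGraph) (hex : ∃ L, IsStrategy G L) :
    ∃ L, IsStrategy G L ∧ cost L ≤ pebNum G := by
  obtain ⟨L, hL⟩ := hex
  have hne : {p | ∃ L, IsStrategy G L ∧ cost L ≤ p}.Nonempty := ⟨cost L, L, hL, le_rfl⟩
  exact Nat.sInf_mem hne

/-- For every pointed graph G and non-sink vertex v,
    ♯G ≤ max(♯(G[v:=0]), ♯(G[v:=1]) + 1). -/
theorem pebbling_number_case_split (G : PGraph) (hG : IsPointed G)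
    (v : ℕ) (hv : v ∈ G.verts) (hvs : v ≠ G.sink) :
    pebNum G ≤ max (pebNum (restrict0 G v)) (pebNum (restrict1 G v) + 1) := by
  obtain ⟨hsV, hE, hAc, -, -⟩ := hG
  -- G0 := restrict0 G v has strategies
  have h0ex : ∃ L, IsStrategy (restrict0 G v) L := by
    apply exists_strategy
    · simp only [restrict0, Finset.mem_filter]
      exact ⟨hv, Relation.ReflTransGen.refl⟩
    · intro e he'
      simp only [restrict0, Finset.mem_filter] at he' ⊢
      obtain ⟨heG, h1, h2⟩ := he'
      exact ⟨⟨(hE e heG).1, h1⟩, (hE e heG).2, h2⟩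
    · intro w hw
      refine hAc w (Relation.TransGen.mono ?_ _ _ hw)
      intro a b hab
      simp only [edgeRel, restrict0, Finset.mem_filter] at hab
      exact hab.1
  -- G1 := restrict1 G v has strategies
  have h1ex : ∃ L, IsStrategy (restrict1 G v) L := by
    apply exists_strategy
    · show G.sink ∈ (restrict1 G v).verts
      simp only [restrict1, restrictSink, Finset.mem_filter]
      simp only [deleteVert, Finset.mem_erase]
      exact ⟨⟨Ne.symm hvs, hsV⟩, Relation.ReflTransGen.refl⟩
    · intro e he'
      simp only [restrict1, restrictSink, Finset.mem_filter] at he' ⊢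
      simp only [deleteVert, Finset.mem_filter,
        Finset.mem_erase] at he' ⊢
      obtain ⟨⟨heG, h1, h2⟩, r1, r2⟩ := he'
      exact ⟨⟨⟨h1, (hE e heG).1⟩, r1⟩, ⟨h2, (hE e heG).2⟩, r2⟩
    · intro w hw
      refine hAc w (Relation.TransGen.mono ?_ _ _ hw)
      intro a b hab
      simp only [edgeRel, restrict1, restrictSink, Finset.mem_filter] at hab
      simp only [deleteVert, Finset.mem_filter] at hab
      exact hab.1.1
  obtain ⟨L0, hL0, hc0⟩ := exists_opt _ h0ex
  obtain ⟨L1, hL1, hc1⟩ := exists_opt _ h1ex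
  obtain ⟨hh0, ⟨C0, hlast0, hsink0⟩, hch0⟩ := hL0
  obtain ⟨hh1, ⟨C1, hlast1, hsink1⟩, hch1⟩ := hL1
  have hvC0 : v ∈ C0 := hsink0
  obtain ⟨E, hhE, hlE, hchE, hsubE⟩ := erase_chain G C0.card C0 v le_rfl hvC0
  set M1 : List (Finset ℕ) := L1.map (insert v) with hM1
  set L : List (Finset ℕ) := L0 ++ (E ++ M1) with hLdef
  -- nonemptiness facts
  have hL0ne : L0 ≠ [] := by intro h; subst h; simp at hh0
  have hL1ne : L1 ≠ [] := by intro h; subst h; simp at hh1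
  have hEne : E ≠ [] := by intro h; subst h; simp at hhE
  have hM1ne : M1 ≠ [] := by
    intro h; rw [hM1] at h; exact hL1ne (List.map_eq_nil_iff.mp h)
  -- the combined strategy
  have hstrat : IsStrategy G L := by
    refine ⟨?_, ?_, ?_⟩
    · rw [hLdef]
      cases L0 with
      | nil => exact absurd rfl hL0ne
      | cons a t => simpa using hh0
    · refine ⟨insert v C1, ?_, Finset.mem_insert_of_mem hsink1⟩
      rw [hLdef, List.getLast?_append, List.getLast?_append]
      have : M1.getLast? = some (insert v C1) := by
        rw [hM1, List.getLast?_map, hlast1]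
        rfl
      rw [this]
      rfl
    · refine List.IsChain.append (hch0.imp fun a b h => pebStep_restrict0 h) ?_ ?_
      · refine List.IsChain.append hchE ?_ ?_
        · rw [hM1, List.isChain_map]
          exact hch1.imp fun a b h => pebStep_restrict1 h
        · intro x hx y hy
          rw [Option.mem_def, hlE, Option.some.injEq] at hx
          subst hx
          have : M1.head? = some {v} := by
            cases L1 with
            | nil => exact absurd rfl hL1ne
            | cons a t =>
              have : a = ∅ := by simpa using hh1
              subst this
              simp [hM1]
          rw [Option.mem_def, this, Option.some.injEq] at hy
          subst hy
          exact pebStep_refl G _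
      · intro x hx y hy
        rw [Option.mem_def, hlast0, Option.some.injEq] at hx
        subst hx
        have : (E ++ M1).head? = some C0 := by
          cases E with
          | nil => exact absurd rfl hEne
          | cons a t =>
            have : a = C0 := by simpa using hhE
            subst this
            rfl
        rw [Option.mem_def, this, Option.some.injEq] at hy
        subst hy
        exact pebStep_refl G _
  -- cost bound
  have hC0card : C0.card ≤ pebNum (restrict0 G v) :=
    cost_le_iff.mp hc0 C0 (List.mem_of_mem_getLast? (by rw [hlast0]; rfl))
  have hcost : cost L ≤ max (pebNum (restrict0 G v)) (pebNum (restrict1 G v) + 1) := by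
    rw [cost_le_iff]
    intro C hC
    rw [hLdef] at hC
    rcases List.mem_append.mp hC with hC | hC
    · exact le_trans (cost_le_iff.mp hc0 C hC) (le_max_left _ _)
    · rcases List.mem_append.mp hC with hC | hC
      · refine le_trans ?_ (le_max_left _ _)
        exact le_trans (Finset.card_le_card (hsubE C hC)) hC0card
      · rw [hM1] at hC
        obtain ⟨D, hD, rfl⟩ := List.mem_map.mp hC
        refine le_trans ?_ (le_max_right _ _)
        have := cost_le_iff.mp hc1 D hD
        have := Finset.card_insert_le v D
        omega
  exact Nat.sInf_le ⟨L, hstrat, hcost⟩
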